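/- arXiv:1407.4570 — 3 statements merged into one kernel-verified Lean document; each statement's English description precedes it below -/
import Mathlib

section
/- Let (Ω, F, P) be a probability space and T > 0. Let b, σ, a, s : Ω × [0,T] → ℝ be (jointly) measurable with σ > 0 almost everywhere, set ρ = b/σ, and assume E[∫₀ᵀ ρ_t² dt] < ∞, E[∫₀ᵀ (a_t² + s_t²) σ_t² dt] < ∞, a_t² ≥ s_t² almost everywhere, and E[∫₀ᵀ ((1/9) s_t² + (1/6)(a_t² − (2/3) s_t²)) σ_t² dt] > 0. Then the modified Sharpe ratio satisfies the bound S(a,s) := (1/3) E[∫₀ᵀ s_t b_t dt] / ( E[∫₀ᵀ ((1/9) s_t² + (1/6)(a_t² − (2/3) s_t²)) σ_t² dt] )^{1/2} ≤ (√6/3) · ( E[∫₀ᵀ ρ_t² dt] )^{1/2}. -/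
open MeasureTheory

/-- Upper-bound half of Theorem 3.1: the modified Sharpe ratio of any admissible
pair `(a, s)` is bounded by `(√6/3) · (E[∫₀ᵀ ρ_t² dt])^{1/2}` where `ρ = b/σ`. -/
theorem modified_sharpe_ratio_upper_bound
    {Ω : Type*} [MeasurableSpace Ω] (μ : Measure Ω) [IsProbabilityMeasure μ]
    (T : ℝ) (hT : 0 < T)
    (b σ a s : Ω × ℝ → ℝ)
    (hb : Measurable b) (hσ : Measurable σ) (ha : Measurable a) (hs : Measurable s)
    (π : Measure (Ω × ℝ))
    (hπ : π = μ.prod (volume.restrict (Set.Icc (0 : ℝ) T)))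
    (hσpos : ∀ᵐ p ∂π, 0 < σ p)
    (hρint : Integrable (fun p => (b p / σ p) ^ 2) π)
    (hasint : Integrable (fun p => (a p ^ 2 + s p ^ 2) * σ p ^ 2) π)
    (hge : ∀ᵐ p ∂π, s p ^ 2 ≤ a p ^ 2)
    (hden : 0 < ∫ p, ((1 / 9) * s p ^ 2 + (1 / 6) * (a p ^ 2 - (2 / 3) * s p ^ 2)) * σ p ^ 2 ∂π) :
    (1 / 3) * (∫ p, s p * b p ∂π) /
        Real.sqrt (∫ p, ((1 / 9) * s p ^ 2 + (1 / 6) * (a p ^ 2 - (2 / 3) * s p ^ 2)) * σ p ^ 2 ∂π)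
      ≤ (Real.sqrt 6 / 3) * Real.sqrt (∫ p, (b p / σ p) ^ 2 ∂π) := by
  set ρ : Ω × ℝ → ℝ := fun p => b p / σ p with hρdef
  set f : Ω × ℝ → ℝ := fun p => s p * σ p with hfdef
  have hfmeas : Measurable f := hs.mul hσ
  have hρmeas : Measurable ρ := hb.div hσ
  -- integrability of squares
  have hs2σ : Integrable (fun p => f p ^ 2) π := by
    refine hasint.mono' ((hfmeas.pow_const 2).aestronglyMeasurable) ?_
    filter_upwards with p
    have h1 : f p ^ 2 = s p ^ 2 * σ p ^ 2 := by simp [hfdef]; ring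
    have h2 : s p ^ 2 * σ p ^ 2 ≤ (a p ^ 2 + s p ^ 2) * σ p ^ 2 := by nlinarith [sq_nonneg (a p), sq_nonneg (σ p)]
    rw [Real.norm_eq_abs, abs_of_nonneg (sq_nonneg _), h1]
    exact h2
  have ha2σ : Integrable (fun p => (a p * σ p) ^ 2) π := by
    refine hasint.mono' (((ha.mul hσ).pow_const 2).aestronglyMeasurable) ?_
    filter_upwards with p
    have h2 : a p ^ 2 * σ p ^ 2 ≤ (a p ^ 2 + s p ^ 2) * σ p ^ 2 := by nlinarith [sq_nonneg (s p), sq_nonneg (σ p)]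
    rw [Real.norm_eq_abs, abs_of_nonneg (sq_nonneg _), mul_pow]
    exact h2
  have hfL2 : MemLp f 2 π := (memLp_two_iff_integrable_sq hfmeas.aestronglyMeasurable).mpr hs2σ
  have hρL2 : MemLp ρ 2 π := (memLp_two_iff_integrable_sq hρmeas.aestronglyMeasurable).mpr hρint
  -- integrability of the product
  have hbd : Integrable (fun p => (1/2) * (f p ^ 2 + ρ p ^ 2)) π := by
    refine ((hs2σ.add hρint).const_mul (1/2)).congr ?_
    filter_upwards with p
    simp [hρdef]
  have hfρint : Integrable (fun p => f p * ρ p) π := by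
    refine hbd.mono' ((hfmeas.mul hρmeas).aestronglyMeasurable) ?_
    filter_upwards with p
    rw [Real.norm_eq_abs, abs_mul]
    nlinarith [sq_nonneg (|f p| - |ρ p|), sq_abs (f p), sq_abs (ρ p), abs_nonneg (f p), abs_nonneg (ρ p)]
  -- a.e. equality s*b = f*ρ
  have hsb_eq : ∫ p, s p * b p ∂π = ∫ p, f p * ρ p ∂π := by
    refine integral_congr_ae ?_
    filter_upwards [hσpos] with p hp
    show s p * b p = (s p * σ p) * (b p / σ p)
    field_simp
  -- Cauchy–Schwarz
  have hCS : ∫ p, f p * ρ p ∂π ≤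
      Real.sqrt (∫ p, f p ^ 2 ∂π) * Real.sqrt (∫ p, ρ p ^ 2 ∂π) := by
    have h1 : ∫ p, f p * ρ p ∂π ≤ ∫ p, ‖f p‖ * ‖ρ p‖ ∂π := by
      refine integral_mono_ae hfρint ?_ ?_
      · exact hfρint.abs.congr (by filter_upwards with p; rw [Real.norm_eq_abs, Real.norm_eq_abs, ← abs_mul])
      · filter_upwards with p
        calc f p * ρ p ≤ |f p * ρ p| := le_abs_self _
          _ = ‖f p‖ * ‖ρ p‖ := by rw [abs_mul]; simp [Real.norm_eq_abs]
    have hconj : Real.HolderConjugate 2 2 := Real.HolderConjugate.two_two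
    have h2of : (ENNReal.ofReal (2:ℝ)) = 2 := by
      rw [ENNReal.ofReal_ofNat]
    have h2 := integral_mul_norm_le_Lp_mul_Lq hconj (h2of ▸ hfL2) (h2of ▸ hρL2) (μ := π)
    have he : ∀ g : Ω × ℝ → ℝ, (∫ p, ‖g p‖ ^ (2:ℝ) ∂π) = ∫ p, g p ^ 2 ∂π := by
      intro g
      refine integral_congr_ae ?_
      filter_upwards with p
      rw [show ((2:ℝ) = ((2:ℕ):ℝ)) by norm_num, Real.rpow_natCast]
      simp [Real.norm_eq_abs, sq_abs]
    rw [he f, he ρ] at h2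
    calc ∫ p, f p * ρ p ∂π ≤ ∫ p, ‖f p‖ * ‖ρ p‖ ∂π := h1
      _ ≤ (∫ p, f p ^ 2 ∂π) ^ ((1:ℝ)/2) * (∫ p, ρ p ^ 2 ∂π) ^ ((1:ℝ)/2) := h2
      _ = Real.sqrt (∫ p, f p ^ 2 ∂π) * Real.sqrt (∫ p, ρ p ^ 2 ∂π) := by
          rw [← Real.sqrt_eq_rpow, ← Real.sqrt_eq_rpow]
  -- the denominator equals (1/6) ∫ (aσ)²
  set D := ∫ p, ((1 / 9) * s p ^ 2 + (1 / 6) * (a p ^ 2 - (2 / 3) * s p ^ 2)) * σ p ^ 2 ∂π with hDdef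
  have hDeq : D = (1/6) * ∫ p, (a p * σ p) ^ 2 ∂π := by
    rw [hDdef, ← integral_const_mul]
    refine integral_congr_ae ?_
    filter_upwards with p
    ring
  -- comparison of squares
  have hS2A2 : ∫ p, f p ^ 2 ∂π ≤ ∫ p, (a p * σ p) ^ 2 ∂π := by
    refine integral_mono_ae hs2σ ha2σ ?_
    filter_upwards [hge] with p hp
    have : f p ^ 2 = s p ^ 2 * σ p ^ 2 := by simp [hfdef]; ring
    rw [this, mul_pow]
    nlinarith [sq_nonneg (σ p)]
  set S2 := ∫ p, f p ^ 2 ∂π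
  set A2 := ∫ p, (a p * σ p) ^ 2 ∂π
  set R := ∫ p, ρ p ^ 2 ∂π with hRdef
  have hRnn : 0 ≤ R := integral_nonneg fun p => sq_nonneg _
  have hS2nn : 0 ≤ S2 := integral_nonneg fun p => sq_nonneg _
  have hDpos : 0 < D := hden
  have hsqrtD : 0 < Real.sqrt D := Real.sqrt_pos.mpr hDpos
  -- main chain
  have hmain : ∫ p, s p * b p ∂π ≤ Real.sqrt 6 * Real.sqrt D * Real.sqrt R := by
    calc ∫ p, s p * b p ∂π = ∫ p, f p * ρ p ∂π := hsb_eq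
      _ ≤ Real.sqrt S2 * Real.sqrt R := hCS
      _ ≤ Real.sqrt A2 * Real.sqrt R := by
          exact mul_le_mul_of_nonneg_right (Real.sqrt_le_sqrt hS2A2) (Real.sqrt_nonneg R)
      _ = Real.sqrt 6 * Real.sqrt D * Real.sqrt R := by
          have hA2 : A2 = 6 * D := by rw [hDeq]; ring
          rw [hA2, Real.sqrt_mul (by norm_num) D]
  rw [div_le_iff₀ hsqrtD]
  calc (1/3) * ∫ p, s p * b p ∂π ≤ (1/3) * (Real.sqrt 6 * Real.sqrt D * Real.sqrt R) := by
        linarith [hmain]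
    _ = Real.sqrt 6 / 3 * Real.sqrt R * Real.sqrt D := by ring
end

section
/- Let (Ω, F, P) be a probability space and T > 0. Let b, σ : Ω × [0,T] → ℝ be measurable with σ > 0 almost everywhere, set ρ = b/σ, and assume 0 < E[∫₀ᵀ ρ_t² dt] < ∞. For λ > 0 define s^λ = (b/σ²)(e^λ − e^{−λ}) and a^λ ≥ 0 by (a^λ)² = (s^λ)² + (b/σ²)². Then the modified Sharpe ratio S(λ) := (1/3) E[∫₀ᵀ s^λ_t b_t dt] / ( E[∫₀ᵀ ((1/9)(s^λ_t)² + (1/6)((a^λ_t)² − (2/3)(s^λ_t)²)) σ_t² dt] )^{1/2} equals (√6/3) · (e^λ − e^{−λ}) / ((e^λ − e^{−λ})² + 1)^{1/2} · ( E[∫₀ᵀ ρ_t² dt] )^{1/2}; in particular S(λ) → (√6/3)·( E[∫₀ᵀ ρ_t² dt] )^{1/2} as λ → +∞. -/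
open MeasureTheory

/-- Attainability half of Theorem 3.1: the rule with barriers proportional to
`b/σ²` with asymmetry parameter `λ` has modified Sharpe ratio
`(√6/3)·(e^λ − e^{−λ})/((e^λ − e^{−λ})² + 1)^{1/2}·(E[∫₀ᵀ ρ²])^{1/2}`, which tends
to the nearly efficient value `(√6/3)·(E[∫₀ᵀ ρ²])^{1/2}` as `λ → ∞`. -/
theorem modified_sharpe_ratio_attained
    {Ω : Type*} [MeasurableSpace Ω] (μ : Measure Ω) [IsProbabilityMeasure μ]
    (T : ℝ) (hT : 0 < T)
    (b σ : Ω × ℝ → ℝ)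
    (hb : Measurable b) (hσ : Measurable σ)
    (π : Measure (Ω × ℝ))
    (hπ : π = μ.prod (volume.restrict (Set.Icc (0 : ℝ) T)))
    (hσpos : ∀ᵐ p ∂π, 0 < σ p)
    (hρint : Integrable (fun p => (b p / σ p) ^ 2) π)
    (hρpos : 0 < ∫ p, (b p / σ p) ^ 2 ∂π)
    (sl al : ℝ → Ω × ℝ → ℝ)
    (hsl : ∀ l p, sl l p = (b p / σ p ^ 2) * (Real.exp l - Real.exp (-l)))
    (halnn : ∀ l p, 0 ≤ al l p)
    (hal : ∀ l p, (al l p) ^ 2 = (sl l p) ^ 2 + (b p / σ p ^ 2) ^ 2)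
    (S : ℝ → ℝ)
    (hS : ∀ l, S l = (1 / 3) * (∫ p, sl l p * b p ∂π) /
        Real.sqrt (∫ p, ((1 / 9) * (sl l p) ^ 2 +
          (1 / 6) * ((al l p) ^ 2 - (2 / 3) * (sl l p) ^ 2)) * σ p ^ 2 ∂π)) :
    (∀ l : ℝ, 0 < l →
      S l = (Real.sqrt 6 / 3) * (Real.exp l - Real.exp (-l)) /
          Real.sqrt ((Real.exp l - Real.exp (-l)) ^ 2 + 1) *
          Real.sqrt (∫ p, (b p / σ p) ^ 2 ∂π)) ∧
    Filter.Tendsto S Filter.atTop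
      (nhds ((Real.sqrt 6 / 3) * Real.sqrt (∫ p, (b p / σ p) ^ 2 ∂π))) := by
  have key : ∀ l : ℝ, S l = (Real.sqrt 6 / 3) * (Real.exp l - Real.exp (-l)) /
      Real.sqrt ((Real.exp l - Real.exp (-l)) ^ 2 + 1) *
      Real.sqrt (∫ p, (b p / σ p) ^ 2 ∂π) := by
    intro l
    set I := ∫ p, (b p / σ p) ^ 2 ∂π with hIdef
    set k := Real.exp l - Real.exp (-l) with hk
    have hnum : (∫ p, sl l p * b p ∂π) = k * I := by
      have hpt : ∀ p, sl l p * b p = k * (b p / σ p) ^ 2 := by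
        intro p
        rw [hsl]
        rcases eq_or_ne (σ p) 0 with h | h
        · simp [h]
        · field_simp
          ring
      simp_rw [hpt, MeasureTheory.integral_const_mul]
      rfl
    have hden : (∫ p, ((1 / 9) * (sl l p) ^ 2 +
          (1 / 6) * ((al l p) ^ 2 - (2 / 3) * (sl l p) ^ 2)) * σ p ^ 2 ∂π)
        = (1 / 6) * (k ^ 2 + 1) * I := by
      have hpt : ∀ p, ((1 / 9) * (sl l p) ^ 2 +
          (1 / 6) * ((al l p) ^ 2 - (2 / 3) * (sl l p) ^ 2)) * σ p ^ 2
          = (1 / 6) * (k ^ 2 + 1) * (b p / σ p) ^ 2 := by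
        intro p
        rw [hal, hsl]
        rcases eq_or_ne (σ p) 0 with h | h
        · simp [h]
        · field_simp
          ring
      simp_rw [hpt, MeasureTheory.integral_const_mul]
      rfl
    rw [hS, hnum, hden]
    have hApos : (0:ℝ) < Real.sqrt (k ^ 2 + 1) := Real.sqrt_pos.2 (by positivity)
    have hBpos : (0:ℝ) < Real.sqrt I := Real.sqrt_pos.2 hρpos
    have h6pos : (0:ℝ) < Real.sqrt 6 := Real.sqrt_pos.2 (by norm_num)
    have hA2 : (Real.sqrt (k ^ 2 + 1)) ^ 2 = k ^ 2 + 1 := Real.sq_sqrt (by positivity)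
    have hB2 : (Real.sqrt I) ^ 2 = I := Real.sq_sqrt hρpos.le
    have h62 : (Real.sqrt 6) ^ 2 = 6 := Real.sq_sqrt (by norm_num)
    have hD : Real.sqrt ((1 / 6) * (k ^ 2 + 1) * I)
        = Real.sqrt (k ^ 2 + 1) * Real.sqrt I / Real.sqrt 6 := by
      rw [show (1 / 6) * (k ^ 2 + 1) * I
          = (Real.sqrt (k ^ 2 + 1) * Real.sqrt I / Real.sqrt 6) ^ 2 by
        rw [div_pow, mul_pow, hA2, hB2, h62]; ring]
      exact Real.sqrt_sq (by positivity)
    rw [hD, ← hB2]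
    field_simp
    linear_combination (-(Real.exp l - Real.exp (-l))) * Real.sq_sqrt (sq_nonneg (Real.sqrt I))
  refine ⟨fun l _ => key l, ?_⟩
  have hktend : Filter.Tendsto (fun l => Real.exp l - Real.exp (-l))
      Filter.atTop Filter.atTop := by
    have h1 : Filter.Tendsto (fun l : ℝ => Real.exp l - 1) Filter.atTop Filter.atTop := by
      simpa [sub_eq_add_neg] using Filter.tendsto_atTop_add_const_right Filter.atTop (-1 : ℝ) Real.tendsto_exp_atTop
    apply Filter.tendsto_atTop_mono' _ _ h1
    filter_upwards [Filter.eventually_ge_atTop (0:ℝ)] with l hl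
    have : Real.exp (-l) ≤ 1 := Real.exp_le_one_iff.2 (by linarith)
    linarith
  have hfrac : Filter.Tendsto (fun x : ℝ => x / Real.sqrt (x ^ 2 + 1))
      Filter.atTop (nhds 1) := by
    have heq : ∀ᶠ x : ℝ in Filter.atTop,
        Real.sqrt (1 - 1 / (x ^ 2 + 1)) = x / Real.sqrt (x ^ 2 + 1) := by
      filter_upwards [Filter.eventually_ge_atTop (0:ℝ)] with x hx
      have hx1 : (0:ℝ) < x ^ 2 + 1 := by positivity
      rw [show 1 - 1 / (x ^ 2 + 1) = x ^ 2 / (x ^ 2 + 1) by field_simp; ring,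
        Real.sqrt_div (by positivity : (0:ℝ) ≤ x ^ 2), Real.sqrt_sq hx]
    have hinner : Filter.Tendsto (fun x : ℝ => 1 - 1 / (x ^ 2 + 1))
        Filter.atTop (nhds 1) := by
      have h2 : Filter.Tendsto (fun x : ℝ => x ^ 2 + 1) Filter.atTop Filter.atTop :=
        Filter.tendsto_atTop_mono (fun x => by simp only [id_eq]; nlinarith [sq_nonneg (x-1), sq_nonneg x]) Filter.tendsto_id
      have h3 : Filter.Tendsto (fun x : ℝ => 1 / (x ^ 2 + 1)) Filter.atTop (nhds 0) := by
        simpa [one_div, Pi.inv_def] using h2.inv_tendsto_atTop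
      simpa using (tendsto_const_nhds (x := (1:ℝ))).sub h3
    have := (Real.continuous_sqrt.tendsto 1).comp hinner
    rw [Real.sqrt_one] at this
    exact this.congr' heq
  have hmain : Filter.Tendsto (fun l => (Real.sqrt 6 / 3 *
      Real.sqrt (∫ p, (b p / σ p) ^ 2 ∂π)) *
      ((Real.exp l - Real.exp (-l)) / Real.sqrt ((Real.exp l - Real.exp (-l)) ^ 2 + 1)))
      Filter.atTop (nhds ((Real.sqrt 6 / 3) * Real.sqrt (∫ p, (b p / σ p) ^ 2 ∂π))) := by
    have := ((hfrac.comp hktend).const_mul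
      (Real.sqrt 6 / 3 * Real.sqrt (∫ p, (b p / σ p) ^ 2 ∂π)))
    simpa [mul_comm, Function.comp] using this
  refine hmain.congr fun l => ?_
  rw [key l]
  ring
end

section
/- Let T > 0, μ > 0 and let ρ : [0,T] → ℝ be continuous. Let W : [0,T] → (0,∞) be continuous with W(t)·e^{W(t)} = (1/2)·exp( ∫_t^T ρ(s)² ds + 1/2 ) for all t ∈ [0,T], and define P(t) = μ / W(t). Then P(T) = 2μ, and for every t ∈ [0,T] the function P is differentiable at t (one-sidedly at the endpoints, i.e. within [0,T]) with derivative P'(t) = ρ(t)² · P(t)² / (P(t) + μ). -/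
noncomputable section

private def qfun (y : ℝ) : ℝ := y + Real.exp y

private lemma qfun_strictMono : StrictMono qfun :=
  strictMono_id.add_monotone Real.exp_monotone

private lemma qfun_continuous : Continuous qfun :=
  continuous_id.add Real.continuous_exp

private lemma qfun_surjective : Function.Surjective qfun := by
  apply Continuous.surjective qfun_continuous
  · exact Filter.tendsto_atTop_mono (fun y => le_add_of_nonneg_right (Real.exp_pos y).le)
      Filter.tendsto_id
  · apply Filter.tendsto_atBot_mono' _ _ (Filter.tendsto_atBot_add_const_right _ 1
      Filter.tendsto_id)
    filter_upwards [Filter.eventually_le_atBot (0 : ℝ)] with y hy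
    have : Real.exp y ≤ 1 := Real.exp_le_one_iff.mpr hy
    simp only [qfun, id_eq]; linarith

private def qinv : ℝ → ℝ :=
  (StrictMono.orderIsoOfSurjective qfun qfun_strictMono qfun_surjective).symm

private lemma qfun_qinv (y : ℝ) : qfun (qinv y) = y :=
  StrictMono.orderIsoOfSurjective_self_symm_apply qfun qfun_strictMono qfun_surjective y

private lemma qinv_qfun (x : ℝ) : qinv (qfun x) = x :=
  StrictMono.orderIsoOfSurjective_symm_apply_self qfun qfun_strictMono qfun_surjective x

private lemma qinv_continuous : Continuous qinv :=
  (StrictMono.orderIsoOfSurjective qfun qfun_strictMono qfun_surjective).symm.continuous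

private lemma hasDerivAt_qinv (y : ℝ) :
    HasDerivAt qinv (1 + Real.exp (qinv y))⁻¹ y := by
  have hq : HasDerivAt qfun (1 + Real.exp (qinv y)) (qinv y) :=
    (hasDerivAt_id _).add (Real.hasDerivAt_exp _)
  exact HasDerivAt.of_local_left_inverse qinv_continuous.continuousAt hq
    (by positivity) (Filter.Eventually.of_forall qfun_qinv)

end

/-- Explicit solution of the scalar Riccati terminal-value problem of Section 5:
if `W : [0,T] → (0,∞)` is continuous with `W(t)·e^{W(t)} = (1/2)·exp(∫_t^T ρ² + 1/2)`
and `P = μ/W`, then `P(T) = 2μ` and `P` is differentiable within `[0,T]` with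
`P'(t) = ρ(t)²·P(t)²/(P(t) + μ)`. -/
theorem riccati_explicit_solution
    (T : ℝ) (hT : 0 < T) (μ : ℝ) (hμ : 0 < μ)
    (ρ : ℝ → ℝ) (hρ : ContinuousOn ρ (Set.Icc 0 T))
    (W : ℝ → ℝ) (hWcont : ContinuousOn W (Set.Icc 0 T))
    (hWpos : ∀ t ∈ Set.Icc (0 : ℝ) T, 0 < W t)
    (hWeq : ∀ t ∈ Set.Icc (0 : ℝ) T,
      W t * Real.exp (W t) = (1 / 2) * Real.exp ((∫ s in t..T, ρ s ^ 2) + 1 / 2))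
    (P : ℝ → ℝ) (hP : ∀ t ∈ Set.Icc (0 : ℝ) T, P t = μ / W t) :
    P T = 2 * μ ∧
    ∀ t ∈ Set.Icc (0 : ℝ) T,
      HasDerivWithinAt P (ρ t ^ 2 * P t ^ 2 / (P t + μ)) (Set.Icc 0 T) t := by
  have hTmem : T ∈ Set.Icc (0 : ℝ) T := Set.right_mem_Icc.mpr hT.le
  set h : ℝ → ℝ := fun u => Real.log (1 / 2) + 1 / 2 + ∫ s in u..T, ρ s ^ 2 with hh
  -- log form of the equation
  have hlog : ∀ u ∈ Set.Icc (0 : ℝ) T, qfun (Real.log (W u)) = h u := by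
    intro u hu
    have hWu := hWpos u hu
    have := hWeq u hu
    have hq : qfun (Real.log (W u)) = Real.log (W u * Real.exp (W u)) := by
      rw [Real.log_mul hWu.ne' (Real.exp_ne_zero _), Real.log_exp, qfun,
        Real.exp_log hWu]
    rw [hq, this, Real.log_mul (by norm_num) (Real.exp_ne_zero _), Real.log_exp, hh]
    ring
  have hWform : ∀ u ∈ Set.Icc (0 : ℝ) T, W u = Real.exp (qinv (h u)) := by
    intro u hu
    rw [← hlog u hu, qinv_qfun, Real.exp_log (hWpos u hu)]
  -- terminal value
  have hWT : W T = 1 / 2 := by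
    have := hWform T hTmem
    rw [hh] at this
    simp only [intervalIntegral.integral_same] at this
    rw [this]
    have : Real.log (1 / 2) + 1 / 2 + 0 = qfun (Real.log (1 / 2)) := by
      rw [qfun, Real.exp_log (by norm_num)]; ring
    rw [this, qinv_qfun, Real.exp_log (by norm_num)]
  refine ⟨by rw [hP T hTmem, hWT]; ring, ?_⟩
  intro t ht
  haveI : Fact (t ∈ Set.Icc (0 : ℝ) T) := ⟨ht⟩
  have hρsq : ContinuousOn (fun s => ρ s ^ 2) (Set.Icc 0 T) := hρ.pow 2
  -- derivative of h
  have hInt : IntervalIntegrable (fun s => ρ s ^ 2) MeasureTheory.volume t T := by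
    apply ContinuousOn.intervalIntegrable
    apply hρsq.mono
    rw [Set.uIcc_of_le ht.2]
    exact Set.Icc_subset_Icc ht.1 le_rfl
  have hh' : HasDerivWithinAt h (-(ρ t ^ 2)) (Set.Icc 0 T) t := by
    apply HasDerivWithinAt.const_add
    exact intervalIntegral.integral_hasDerivWithinAt_left hInt
      (hρsq.stronglyMeasurableAtFilter_nhdsWithin measurableSet_Icc t)
      (hρsq t ht)
  -- derivative of u ↦ exp (qinv (h u))
  set w : ℝ := W t with hw
  have hwt : w = Real.exp (qinv (h t)) := hWform t ht
  have hwpos : 0 < w := hWpos t ht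
  have hq1 : HasDerivWithinAt (fun u => qinv (h u))
      ((1 + Real.exp (qinv (h t)))⁻¹ * (-(ρ t ^ 2))) (Set.Icc 0 T) t :=
    (hasDerivAt_qinv (h t)).comp_hasDerivWithinAt t hh'
  have hq2 : HasDerivWithinAt (fun u => Real.exp (qinv (h u)))
      (Real.exp (qinv (h t)) * ((1 + Real.exp (qinv (h t)))⁻¹ * (-(ρ t ^ 2))))
      (Set.Icc 0 T) t := (Real.hasDerivAt_exp _).comp_hasDerivWithinAt t hq1
  rw [← hwt] at hq2
  have hq3 : HasDerivWithinAt (fun u => μ / Real.exp (qinv (h u)))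
      (μ * (-(w * ((1 + w)⁻¹ * (-(ρ t ^ 2)))) / w ^ 2)) (Set.Icc 0 T) t := by
    have h5 := (hq2.inv (Real.exp_pos _).ne').const_mul μ
    rw [← hwt] at h5
    simpa only [div_eq_mul_inv, Pi.inv_apply] using h5
  -- transfer to P
  have hPW : ∀ u ∈ Set.Icc (0 : ℝ) T, P u = μ / Real.exp (qinv (h u)) := by
    intro u hu; rw [hP u hu, hWform u hu]
  have hq4 : HasDerivWithinAt P
      (μ * (-(w * ((1 + w)⁻¹ * (-(ρ t ^ 2)))) / w ^ 2)) (Set.Icc 0 T) t :=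
    hq3.congr hPW (hPW t ht)
  convert hq4 using 1
  rw [hP t ht, ← hw]
  have h1w : (0 : ℝ) < 1 + w := by linarith
  field_simp
end
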